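/- Let G be a connected k-leaf power with k-leaf root T, let C ⊆ V(G) be a clique of G, and let X ⊆ V(G) with C ⊆ X ⊆ C ∪ N_G(C). Then the tree T|C has height at most k, every leaf of X \ C is at distance at most 2k from the root of T|C in T, and hence the restriction T|X has height at most 3k. -/

import Mathlib

/-- A finite rooted tree on vertex type `α`, encoded by a parent function.
The root is its own parent, and every vertex reaches the root by iterating `parent`. -/
structure RTree (α : Type) where
  root : α
  parent : α → α
  parent_root : parent root = root
  reaches : ∀ v : α, ∃ n : ℕ, parent^[n] v = root

namespace RTree

variable {α : Type}

/-- The underlying undirected graph of a rooted tree. -/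
def graph (T : RTree α) : SimpleGraph α :=
  SimpleGraph.fromRel (fun a b => T.parent a = b)

/-- Distance between two nodes of the tree. -/
noncomputable def dist (T : RTree α) (u v : α) : ℕ := T.graph.dist u v

/-- The set of children of a node. -/
def children (T : RTree α) (v : α) : Set α := {u | u ≠ T.root ∧ T.parent u = v}

/-- A leaf is a node with no children. -/
def IsLeaf (T : RTree α) (v : α) : Prop := T.children v = ∅

/-- The set of leaves of the tree. -/
def leaves (T : RTree α) : Set α := {v | T.IsLeaf v}

/-- `u` is a descendant of `v` (possibly `u = v`). -/
def Descends (T : RTree α) (u v : α) : Prop := ∃ n : ℕ, T.parent^[n] u = v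

end RTree

/-- `T` together with the identification `f` of vertices of `G` with the leaves of `T`
is a `k`-leaf root of `G`: the leaves of `T` are exactly (the image of) `V(G)`, and
distinct vertices are adjacent in `G` iff their distance in `T` is at most `k`. -/
def IsLeafRoot {V W : Type} (k : ℕ) (G : SimpleGraph V) (T : RTree W) (f : V → W) : Prop :=
  Function.Injective f ∧ Set.range f = T.leaves ∧
    ∀ u v : V, u ≠ v → (G.Adj u v ↔ T.dist (f u) (f v) ≤ k)

/-- `G` is a `k`-leaf power if it admits a (finite) `k`-leaf root.
(The empty graph is a `k`-leaf power via the empty tree, which our encoding of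
rooted trees cannot represent, whence the first disjunct.) -/
def IsKLeafPower {V : Type} (k : ℕ) (G : SimpleGraph V) : Prop :=
  IsEmpty V ∨ ∃ W : Type, Finite W ∧ ∃ (T : RTree W) (f : V → W), IsLeafRoot k G T f

/-- The vertex set of the restriction `T|X`: all vertices lying on a shortest path
between two elements of `X`. -/
def restrictSet {α : Type} (T : RTree α) (X : Set α) : Set α :=
  {w | ∃ u ∈ X, ∃ v ∈ X, T.dist u w + T.dist w v = T.dist u v}

namespace RTree

variable {α : Type} (T : RTree α)

open Classical in
noncomputable def depth (v : α) : ℕ := Nat.find (T.reaches v)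

lemma anc_root (n : ℕ) : T.parent^[n] T.root = T.root := Function.iterate_fixed T.parent_root n

lemma anc_anc (m n : ℕ) (v : α) : T.parent^[m] (T.parent^[n] v) = T.parent^[m + n] v :=
  (Function.iterate_add_apply _ m n v).symm

open Classical in
lemma anc_depth (v : α) : T.parent^[T.depth v] v = T.root := Nat.find_spec (T.reaches v)

open Classical in
lemma depth_le {v : α} {n : ℕ} (h : T.parent^[n] v = T.root) : T.depth v ≤ n :=
  Nat.find_min' (T.reaches v) h

lemma anc_eq_root {v : α} {n : ℕ} (h : T.depth v ≤ n) : T.parent^[n] v = T.root := by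
  have h1 := T.anc_depth v
  calc T.parent^[n] v = T.parent^[(n - T.depth v) + T.depth v] v := by rw [Nat.sub_add_cancel h]
  _ = T.parent^[n - T.depth v] (T.parent^[T.depth v] v) := Function.iterate_add_apply _ _ _ _
  _ = T.root := by rw [h1]; exact T.anc_root _

lemma depth_root : T.depth T.root = 0 := Nat.le_zero.mp (T.depth_le rfl)

lemma depth_eq_zero {v : α} (h : T.depth v = 0) : v = T.root := by
  have h1 := T.anc_depth v
  rw [h] at h1
  simpa using h1

lemma parent_eq_self {v : α} : T.parent v = v ↔ v = T.root := by
  constructor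
  · intro h
    obtain ⟨n, hn⟩ := T.reaches v
    rw [Function.iterate_fixed h n] at hn; exact hn
  · rintro rfl; exact T.parent_root

lemma depth_parent {v : α} (h : v ≠ T.root) : T.depth (T.parent v) + 1 = T.depth v := by
  have hd : T.depth v ≠ 0 := fun hh => h (T.depth_eq_zero hh)
  have h1 : T.depth v ≤ T.depth (T.parent v) + 1 := T.depth_le (by
    rw [Function.iterate_succ_apply]
    exact T.anc_depth (T.parent v))
  have h2 : T.depth (T.parent v) ≤ T.depth v - 1 := T.depth_le (by
    have he : T.parent^[T.depth v - 1] (T.parent v) = T.parent^[T.depth v] v := by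
      rw [← Function.iterate_succ_apply]
      congr 1
      omega
    rw [he]; exact T.anc_depth v)
  omega

lemma depth_anc (v : α) : ∀ n, n ≤ T.depth v → T.depth (T.parent^[n] v) = T.depth v - n := by
  intro n
  induction n with
  | zero => simp
  | succ n ih =>
    intro hn
    have h1 := ih (by omega)
    have hne : T.parent^[n] v ≠ T.root := by
      intro hr; rw [hr, T.depth_root] at h1; omega
    rw [Function.iterate_succ_apply']
    have := T.depth_parent hne
    omega

lemma descends_refl (v : α) : T.Descends v v := ⟨0, rfl⟩

lemma descends_trans {u v w : α} (h1 : T.Descends u v) (h2 : T.Descends v w) : T.Descends u w := by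
  obtain ⟨m, hm⟩ := h1; obtain ⟨n, hn⟩ := h2
  exact ⟨n + m, by rw [← T.anc_anc n m u, hm, hn]⟩

lemma descends_root (v : α) : T.Descends v T.root := ⟨T.depth v, T.anc_depth v⟩

lemma descends_parent (v : α) : T.Descends v (T.parent v) := ⟨1, rfl⟩

lemma depth_le_of_descends {u v : α} (h : T.Descends u v) : T.depth v ≤ T.depth u := by
  obtain ⟨n, hn⟩ := h
  by_cases hc : n ≤ T.depth u
  · have := T.depth_anc u n hc
    rw [hn] at this
    omega
  · have h2 : T.parent^[n] u = T.root := T.anc_eq_root (by omega)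
    rw [hn] at h2
    rw [h2, T.depth_root]
    omega

lemma eq_of_descends_of_depth_le {u v : α} (h : T.Descends u v) (h2 : T.depth u ≤ T.depth v) :
    u = v := by
  obtain ⟨n, hn⟩ := h
  by_cases hc : n ≤ T.depth u
  · have hd := T.depth_anc u n hc
    rw [hn] at hd
    have hn0 : n = 0 := by omega
    rw [hn0] at hn
    simpa using hn
  · have hv : v = T.root := by rw [← hn]; exact T.anc_eq_root (by omega)
    have hu : T.depth u = 0 := by rw [hv, T.depth_root] at h2; omega
    rw [hv]
    exact T.depth_eq_zero hu

lemma descends_antisymm {u v : α} (h1 : T.Descends u v) (h2 : T.Descends v u) : u = v :=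
  T.eq_of_descends_of_depth_le h1 (T.depth_le_of_descends h2)

lemma descends_comparable {u x y : α} (hx : T.Descends u x) (hy : T.Descends u y) :
    T.Descends x y ∨ T.Descends y x := by
  obtain ⟨m, hm⟩ := hx; obtain ⟨n, hn⟩ := hy
  rcases le_total m n with hc | hc
  · left; exact ⟨n - m, by rw [← hm, T.anc_anc, Nat.sub_add_cancel hc, hn]⟩
  · right; exact ⟨m - n, by rw [← hn, T.anc_anc, Nat.sub_add_cancel hc, hm]⟩

lemma lca_exists (u v : α) : ∃ n, T.Descends v (T.parent^[n] u) :=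
  ⟨T.depth u, by rw [T.anc_depth]; exact T.descends_root v⟩

open Classical in
noncomputable def lca (u v : α) : α := T.parent^[Nat.find (T.lca_exists u v)] u

open Classical in
lemma descends_lca_left (u v : α) : T.Descends u (T.lca u v) := ⟨_, rfl⟩

open Classical in
lemma descends_lca_right (u v : α) : T.Descends v (T.lca u v) := Nat.find_spec (T.lca_exists u v)

open Classical in
lemma descends_lca {u v x : α} (hx : T.Descends u x) (hy : T.Descends v x) :
    T.Descends (T.lca u v) x := by
  obtain ⟨n, hn⟩ := hx
  have hP : T.Descends v (T.parent^[n] u) := by rw [hn]; exact hy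
  have hm : Nat.find (T.lca_exists u v) ≤ n := Nat.find_min' _ hP
  exact ⟨n - Nat.find (T.lca_exists u v), by
    rw [lca, T.anc_anc, Nat.sub_add_cancel hm, hn]⟩

lemma lca_unique {u v z : α} (hz1 : T.Descends u z) (hz2 : T.Descends v z)
    (hz3 : ∀ x, T.Descends u x → T.Descends v x → T.Descends z x) : z = T.lca u v :=
  T.descends_antisymm (hz3 _ (T.descends_lca_left u v) (T.descends_lca_right u v))
    (T.descends_lca hz1 hz2)

lemma lca_self (u : α) : T.lca u u = u :=
  (T.lca_unique (T.descends_refl u) (T.descends_refl u) (fun _ h _ => h)).symm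

lemma lca_root (v : α) : T.lca T.root v = T.root :=
  (T.lca_unique (T.descends_refl _) (T.descends_root v) (fun _ h _ => h)).symm

lemma adj_iff {a b : α} : T.graph.Adj a b ↔ a ≠ b ∧ (T.parent a = b ∨ T.parent b = a) := by
  simp [RTree.graph, SimpleGraph.fromRel_adj]

lemma adj_parent {v : α} (h : v ≠ T.root) : T.graph.Adj v (T.parent v) :=
  T.adj_iff.mpr ⟨fun he => h (T.parent_eq_self.mp he.symm), Or.inl rfl⟩

lemma reachable_anc (v : α) (n : ℕ) : T.graph.Reachable v (T.parent^[n] v) := by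
  induction n with
  | zero => exact SimpleGraph.Reachable.refl v
  | succ n ih =>
    rw [Function.iterate_succ_apply']
    by_cases hr : T.parent^[n] v = T.root
    · rw [hr, T.parent_root]
      rw [hr] at ih
      exact ih
    · exact ih.trans (T.adj_parent hr).reachable

lemma graph_connected : T.graph.Connected := by
  rw [SimpleGraph.connected_iff]
  refine ⟨fun u v => ?_, ⟨T.root⟩⟩
  have h1 := T.reachable_anc u (T.depth u); rw [T.anc_depth] at h1
  have h2 := T.reachable_anc v (T.depth v); rw [T.anc_depth] at h2
  exact h1.trans h2.symm

lemma dist_comm' (u v : α) : T.dist u v = T.dist v u := SimpleGraph.dist_comm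

lemma dist_triangle' (u v w : α) : T.dist u w ≤ T.dist u v + T.dist v w :=
  T.graph_connected.dist_triangle

lemma dist_self' (v : α) : T.dist v v = 0 := SimpleGraph.dist_self

lemma dist_anc_le (v : α) (n : ℕ) : T.dist v (T.parent^[n] v) ≤ n := by
  induction n with
  | zero => simpa using T.dist_self' v
  | succ n ih =>
    rw [Function.iterate_succ_apply']
    by_cases hr : T.parent^[n] v = T.root
    · rw [hr, T.parent_root]
      rw [hr] at ih
      omega
    · have h1 : T.dist (T.parent^[n] v) (T.parent (T.parent^[n] v)) ≤ 1 := by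
        have := SimpleGraph.dist_le ((T.adj_parent hr).toWalk)
        simpa [RTree.dist] using this
      have := T.dist_triangle' v (T.parent^[n] v) (T.parent (T.parent^[n] v))
      omega

lemma dist_descends_le {u z : α} (h : T.Descends u z) : T.dist u z ≤ T.depth u - T.depth z := by
  obtain ⟨n, hn⟩ := h
  by_cases hc : n ≤ T.depth u
  · have hd := T.depth_anc u n hc
    rw [hn] at hd
    have h2 := T.dist_anc_le u n
    rw [hn] at h2
    omega
  · have hz : z = T.root := by rw [← hn]; exact T.anc_eq_root (by omega)
    subst hz
    have h2 := T.dist_anc_le u (T.depth u)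
    rw [T.anc_depth] at h2
    rw [T.depth_root]
    omega

lemma lca_parent_of_descends {u a : α} (h : T.Descends u a) :
    T.lca u (T.parent a) = T.parent a :=
  (T.lca_unique (T.descends_trans h (T.descends_parent a)) (T.descends_refl _)
    (fun _ _ h2 => h2)).symm

lemma lca_parent_of_ne {u a : α} (h : T.lca u a ≠ a) :
    T.lca u (T.parent a) = T.lca u a := by
  obtain ⟨n, hn⟩ := T.descends_lca_right u a
  have hn0 : n ≠ 0 := by
    rintro rfl
    exact h hn.symm
  refine (T.lca_unique (T.descends_lca_left u a) ?_ ?_).symm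
  · refine ⟨n - 1, ?_⟩
    have h2 := T.anc_anc (n - 1) 1 a
    rw [Function.iterate_one] at h2
    rw [h2, show n - 1 + 1 = n from by omega, hn]
  · intro x h1 h2
    exact T.descends_lca h1 (T.descends_trans (T.descends_parent a) h2)

lemma phi_parent (u : α) {a : α} (ha : a ≠ T.root) :
    ((T.depth (T.parent a) : ℤ) - 2 * T.depth (T.lca u (T.parent a))
      = (T.depth a : ℤ) - 2 * T.depth (T.lca u a) + 1) ∨
    ((T.depth (T.parent a) : ℤ) - 2 * T.depth (T.lca u (T.parent a))
      = (T.depth a : ℤ) - 2 * T.depth (T.lca u a) - 1) := by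
  have hdp := T.depth_parent ha
  by_cases hc : T.lca u a = a
  · left
    have h2 : T.lca u (T.parent a) = T.parent a :=
      T.lca_parent_of_descends (hc ▸ T.descends_lca_left u a)
    rw [h2, hc]
    omega
  · right
    rw [T.lca_parent_of_ne hc]
    omega

lemma phi_adj (u : α) {a b : α} (h : T.graph.Adj a b) :
    ((T.depth b : ℤ) - 2 * T.depth (T.lca u b))
      ≤ (T.depth a : ℤ) - 2 * T.depth (T.lca u a) + 1 := by
  obtain ⟨hne, hab | hba⟩ := T.adj_iff.mp h
  · have ha : a ≠ T.root := by
      rintro rfl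
      exact hne (by rw [← hab]; exact T.parent_root.symm)
    rcases T.phi_parent u ha with h1 | h1 <;> rw [← hab] <;> omega
  · have hb : b ≠ T.root := by
      rintro rfl
      exact hne (by rw [← hba]; exact T.parent_root)
    rcases T.phi_parent u hb with h1 | h1 <;> rw [← hba] <;> omega

lemma phi_walk (u : α) {x y : α} (p : T.graph.Walk x y) :
    ((T.depth y : ℤ) - 2 * T.depth (T.lca u y))
      ≤ (T.depth x : ℤ) - 2 * T.depth (T.lca u x) + p.length := by
  induction p with
  | nil => simp
  | @cons a c d h q ih =>
    have h2 := T.phi_adj u h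
    rw [SimpleGraph.Walk.length_cons]
    push_cast
    omega

lemma dist_ge (u v : α) :
    (T.depth u : ℤ) + T.depth v - 2 * T.depth (T.lca u v) ≤ T.dist u v := by
  obtain ⟨p, hp⟩ := (T.graph_connected u v).exists_walk_length_eq_dist
  have h1 := T.phi_walk u p
  rw [T.lca_self, hp] at h1
  have : T.dist u v = T.graph.dist u v := rfl
  omega

lemma dist_eq_int (u v : α) :
    (T.dist u v : ℤ) = T.depth u + T.depth v - 2 * T.depth (T.lca u v) := by
  have h1 := T.dist_ge u v
  have ha := T.dist_descends_le (T.descends_lca_left u v)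
  have hb := T.dist_descends_le (T.descends_lca_right u v)
  have hu := T.depth_le_of_descends (T.descends_lca_left u v)
  have hv := T.depth_le_of_descends (T.descends_lca_right u v)
  have h2 : T.dist u v ≤ T.dist u (T.lca u v) + T.dist (T.lca u v) v :=
    T.dist_triangle' _ _ _
  have h3 : T.dist (T.lca u v) v = T.dist v (T.lca u v) := T.dist_comm' _ _
  omega

lemma dist_root_eq (v : α) : T.dist T.root v = T.depth v := by
  have := T.dist_eq_int T.root v
  rw [T.lca_root, T.depth_root] at this
  omega

lemma dist_of_descends_int {u z : α} (h : T.Descends u z) :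
    (T.dist z u : ℤ) = (T.depth u : ℤ) - T.depth z := by
  have hl : T.lca z u = z := (T.lca_unique (T.descends_refl z) h (fun _ h1 _ => h1)).symm
  have := T.dist_eq_int z u
  rw [hl] at this
  omega

lemma not_descends_leaf {x y : α} (hx : x ∈ T.leaves) (h : T.Descends y x) (hne : y ≠ x) :
    False := by
  classical
  have hex : ∃ n, T.parent^[n] y = x := h
  have hspec : T.parent^[Nat.find hex] y = x := Nat.find_spec hex
  have hn0 : Nat.find hex ≠ 0 := by
    intro h0
    apply hne
    rw [← hspec, h0]
    simp
  have hpc : T.parent (T.parent^[Nat.find hex - 1] y) = x := by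
    have h2 := T.anc_anc 1 (Nat.find hex - 1) y
    rw [Function.iterate_one] at h2
    rw [h2, show 1 + (Nat.find hex - 1) = Nat.find hex from by omega]
    exact hspec
  have hcne : T.parent^[Nat.find hex - 1] y ≠ x := by
    intro hcx
    exact Nat.find_min hex (m := Nat.find hex - 1) (by omega) hcx
  have hcroot : T.parent^[Nat.find hex - 1] y ≠ T.root := by
    intro hr
    apply hcne
    rw [hr] at hpc ⊢
    rw [T.parent_root] at hpc
    exact hpc
  have hmem : T.parent^[Nat.find hex - 1] y ∈ T.children x := ⟨hcroot, hpc⟩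
  have hempty : T.children x = ∅ := hx
  rw [hempty] at hmem
  exact hmem

lemma mem_restrictSet_self {S : Set α} {u : α} (hu : u ∈ S) : u ∈ restrictSet T S :=
  ⟨u, hu, u, hu, by rw [T.dist_self']⟩

lemma descends_of_on_path {u v w : α} (h : T.dist u w + T.dist w v = T.dist u v) :
    T.Descends w (T.lca u v) := by
  have e1 := T.dist_eq_int u w
  have e2 := T.dist_eq_int w v
  have e3 := T.dist_eq_int u v
  have hwa : T.Descends w (T.lca u w) := T.descends_lca_right u w
  have hwb : T.Descends w (T.lca w v) := T.descends_lca_left w v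
  have hua : T.Descends u (T.lca u w) := T.descends_lca_left u w
  have hvb : T.Descends v (T.lca w v) := T.descends_lca_right w v
  have h' : (T.dist u w : ℤ) + T.dist w v = T.dist u v := by exact_mod_cast h
  rcases T.descends_comparable hwa hwb with hab | hba
  · -- lca w v is an ancestor of lca u w, hence of u and v
    have hLb : T.Descends (T.lca u v) (T.lca w v) :=
      T.descends_lca (T.descends_trans hua hab) hvb
    have d1 := T.depth_le_of_descends hwa
    have d2 := T.depth_le_of_descends hLb
    have hdep : T.depth (T.lca u w) = T.depth w := by omega
    have : w = T.lca u w := T.eq_of_descends_of_depth_le hwa (by omega)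
    have hdep2 : T.depth (T.lca w v) = T.depth (T.lca u v) := by omega
    have hLbe : T.lca u v = T.lca w v := T.eq_of_descends_of_depth_le hLb (by omega)
    rw [hLbe]
    exact hwb
  · have hLa : T.Descends (T.lca u v) (T.lca u w) :=
      T.descends_lca hua (T.descends_trans hvb hba)
    have d1 := T.depth_le_of_descends hwb
    have d2 := T.depth_le_of_descends hLa
    have hdep : T.depth (T.lca w v) = T.depth w := by omega
    have hdep2 : T.depth (T.lca u w) = T.depth (T.lca u v) := by omega
    have hLae : T.lca u v = T.lca u w := T.eq_of_descends_of_depth_le hLa (by omega)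
    rw [hLae]
    exact hwa

lemma closure_root {S : Set α} {a0 : α} (ha0 : a0 ∈ S) :
    ∃ z : α, (∀ b ∈ S, T.Descends b z) ∧ z ∈ restrictSet T S ∧
      (∀ w ∈ restrictSet T S, T.Descends w z) ∧
      (z = a0 ∨ ∃ b ∈ S, b ≠ a0 ∧ z = T.lca a0 b) := by
  classical
  have hex : ∃ n, ∀ b ∈ S, T.Descends b (T.parent^[n] a0) :=
    ⟨T.depth a0, fun b _ => by rw [T.anc_depth]; exact T.descends_root b⟩
  have hall : ∀ b ∈ S, T.Descends b (T.parent^[Nat.find hex] a0) := Nat.find_spec hex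
  set m := Nat.find hex with hm
  set z := T.parent^[m] a0 with hz
  have hlca : z = a0 ∨ ∃ b ∈ S, b ≠ a0 ∧ z = T.lca a0 b := by
    rcases Nat.eq_zero_or_pos m with h0 | hpos
    · left; rw [hz, h0]; simp
    · right
      have hmin := Nat.find_min hex (m := m - 1) (by omega)
      push_neg at hmin
      obtain ⟨b, hbS, hbd⟩ := hmin
      refine ⟨b, hbS, ?_, ?_⟩
      · rintro rfl
        exact hbd ⟨m - 1, rfl⟩
      · refine T.lca_unique ⟨m, rfl⟩ (hall b hbS) ?_
        rintro x ⟨n, hn⟩ hbx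
        have hmn : m ≤ n := by
          by_contra hlt
          push_neg at hlt
          have hxd : T.Descends x (T.parent^[m - 1] a0) :=
            ⟨m - 1 - n, by rw [← hn, T.anc_anc]; congr 1; omega⟩
          exact hbd (T.descends_trans hbx hxd)
        exact ⟨n - m, by rw [hz, T.anc_anc, Nat.sub_add_cancel hmn, hn]⟩
  have hmem : z ∈ restrictSet T S := by
    rcases hlca with h0 | ⟨b, hbS, hba, hzl⟩
    · rw [h0]; exact T.mem_restrictSet_self ha0
    · refine ⟨a0, ha0, b, hbS, ?_⟩
      have h1 := T.dist_of_descends_int (⟨m, rfl⟩ : T.Descends a0 z)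
      have h2 := T.dist_of_descends_int (hall b hbS)
      have h3 := T.dist_eq_int a0 b
      rw [← hzl] at h3
      have hcomm : T.dist a0 z = T.dist z a0 := T.dist_comm' _ _
      omega
  refine ⟨z, hall, hmem, ?_, hlca⟩
  rintro w ⟨u, hu, v, hv, hw⟩
  exact T.descends_trans (T.descends_of_on_path hw) (T.descends_lca (hall u hu) (hall v hv))

end RTree

/-- Let `G` be a connected `k`-leaf power with `k`-leaf root `T`, `C` a nonempty clique of
`G`, and `C ⊆ X ⊆ C ∪ N_G(C)`.  Then (with `rC` the vertex of `T|C` closest to the root)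
`T|C` has height at most `k` (every leaf of `T|C` is at distance at most `k - 1` from `rC`),
every vertex of `X \ C` is at distance at most `2k` from `rC` in `T`, and the restriction
`T|X` has height at most `3k` (with `rX` its vertex closest to the root, every leaf of
`T|X` is at distance at most `3k - 1` from `rX`). -/
theorem stmt8 {V W : Type} [Finite W] (k : ℕ) (hk : 1 ≤ k) (G : SimpleGraph V)
    (T : RTree W) (f : V → W) (hG : G.Connected) (h : IsLeafRoot k G T f)
    (C X : Set V) (hCne : C.Nonempty)
    (hclique : ∀ u ∈ C, ∀ v ∈ C, u ≠ v → G.Adj u v)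
    (hCX : C ⊆ X)
    (hXC : X ⊆ C ∪ {v : V | v ∉ C ∧ ∃ u ∈ C, G.Adj u v}) :
    ∃ rC ∈ restrictSet T (f '' C),
      (∀ w ∈ restrictSet T (f '' C), T.dist T.root rC ≤ T.dist T.root w) ∧
      (∀ u ∈ C, T.dist rC (f u) + 1 ≤ k) ∧
      (∀ x ∈ X \ C, T.dist rC (f x) ≤ 2 * k) ∧
      ∃ rX ∈ restrictSet T (f '' X),
        (∀ w ∈ restrictSet T (f '' X), T.dist T.root rX ≤ T.dist T.root w) ∧
        ∀ x ∈ X, T.dist rX (f x) + 1 ≤ 3 * k := by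
  obtain ⟨hinj, hrange, hadj⟩ := h
  obtain ⟨c0, hc0⟩ := hCne
  have hleaf : ∀ v : V, f v ∈ T.leaves := fun v => hrange ▸ ⟨v, rfl⟩
  obtain ⟨zC, hC1, hC2, hC3, hC4⟩ := T.closure_root (Set.mem_image_of_mem f hc0)
  have hdzC : ∀ u ∈ C, (T.dist zC (f u) : ℤ) = (T.depth (f u) : ℤ) - T.depth zC := fun u hu =>
    T.dist_of_descends_int (hC1 _ ⟨u, hu, rfl⟩)
  -- Step B : height of T|C at most k
  have hB : ∀ u ∈ C, T.dist zC (f u) + 1 ≤ k := by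
    rcases hC4 with hz0 | ⟨b, hbC, hbne, hzl⟩
    · intro u hu
      have hdesc : T.Descends (f u) zC := hC1 _ ⟨u, hu, rfl⟩
      have heq : f u = zC := by
        by_contra hne
        exact T.not_descends_leaf (by rw [hz0]; exact hleaf c0) hdesc hne
      rw [heq, T.dist_self']
      omega
    · obtain ⟨c1, hc1, rfl⟩ := hbC
      have hne01 : c0 ≠ c1 := fun he => hbne (congrArg f he.symm)
      have hd0 : T.Descends (f c0) zC := hC1 _ ⟨c0, hc0, rfl⟩
      have hd1 : T.Descends (f c1) zC := hC1 _ ⟨c1, hc1, rfl⟩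
      have hzc0 : zC ≠ f c0 := by
        intro he
        exact T.not_descends_leaf (show zC ∈ T.leaves by rw [he]; exact hleaf c0) hd1 (fun hh => hbne (hh.trans he))
      have hzc1 : zC ≠ f c1 := by
        intro he
        exact T.not_descends_leaf (show zC ∈ T.leaves by rw [he]; exact hleaf c1) hd0
          (fun hh => hzc0 hh.symm)
      have hdep0 : T.depth zC < T.depth (f c0) := by
        rcases lt_or_eq_of_le (T.depth_le_of_descends hd0) with hlt | heq
        · exact hlt
        · exact absurd (T.eq_of_descends_of_depth_le hd0 heq.ge) (fun hh => hzc0 hh.symm)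
      have hdep1 : T.depth zC < T.depth (f c1) := by
        rcases lt_or_eq_of_le (T.depth_le_of_descends hd1) with hlt | heq
        · exact hlt
        · exact absurd (T.eq_of_descends_of_depth_le hd1 heq.ge) (fun hh => hzc1 hh.symm)
      have hd01 : T.dist (f c0) (f c1) ≤ k :=
        (hadj c0 c1 hne01).mp (hclique c0 hc0 c1 hc1 hne01)
      have he01 := T.dist_eq_int (f c0) (f c1)
      rw [← hzl] at he01
      intro u hu
      have hdu : T.Descends (f u) zC := hC1 _ ⟨u, hu, rfl⟩
      have hpz : T.Descends (T.lca (f u) (f c0)) zC :=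
        T.descends_lca hdu hd0
      have h5 := hdzC u hu
      by_cases hpc : T.lca (f u) (f c0) = zC
      · by_cases huc0 : f u = f c0
        · have hdd : T.depth (f u) = T.depth (f c0) := by rw [huc0]
          omega
        · have hadj0 : T.dist (f u) (f c0) ≤ k :=
            (hadj u c0 (fun he => huc0 (congrArg f he))).mp
              (hclique u hu c0 hc0 (fun he => huc0 (congrArg f he)))
          have he := T.dist_eq_int (f u) (f c0)
          rw [hpc] at he
          omega
      · have hdp : T.depth zC < T.depth (T.lca (f u) (f c0)) := by
          rcases lt_or_eq_of_le (T.depth_le_of_descends hpz) with hlt | heq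
          · exact hlt
          · exact absurd (T.eq_of_descends_of_depth_le hpz heq.ge) hpc
        have hqz : T.Descends (T.lca (f u) (f c1)) zC := T.descends_lca hdu hd1
        have hq : T.lca (f u) (f c1) = zC := by
          by_contra hqne
          have hdq : T.depth zC < T.depth (T.lca (f u) (f c1)) := by
            rcases lt_or_eq_of_le (T.depth_le_of_descends hqz) with hlt | heq
            · exact hlt
            · exact absurd (T.eq_of_descends_of_depth_le hqz heq.ge) hqne
          rcases T.descends_comparable (T.descends_lca_left (f u) (f c0))
              (T.descends_lca_left (f u) (f c1)) with hpq | hqp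
          · have hd : T.Descends zC (T.lca (f u) (f c1)) := by
              rw [hzl]
              exact T.descends_lca
                (T.descends_trans (T.descends_lca_right (f u) (f c0)) hpq)
                (T.descends_lca_right (f u) (f c1))
            have := T.depth_le_of_descends hd
            omega
          · have hd : T.Descends zC (T.lca (f u) (f c0)) := by
              rw [hzl]
              exact T.descends_lca (T.descends_lca_right (f u) (f c0))
                (T.descends_trans (T.descends_lca_right (f u) (f c1)) hqp)
            have := T.depth_le_of_descends hd
            omega
        have huc1 : f u ≠ f c1 := by
          intro he
          apply hzc1
          rw [← hq, he, T.lca_self]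
        have hadj1 : T.dist (f u) (f c1) ≤ k :=
          (hadj u c1 (fun he => huc1 (congrArg f he))).mp
            (hclique u hu c1 hc1 (fun he => huc1 (congrArg f he)))
        have he := T.dist_eq_int (f u) (f c1)
        rw [hq] at he
        omega
  -- Step C : X \ C within 2k of zC
  have hCdist : ∀ x ∈ X \ C, T.dist zC (f x) ≤ 2 * k := by
    rintro x ⟨hxX, hxC⟩
    have hx' := hXC hxX
    rw [Set.mem_union, Set.mem_setOf_eq] at hx'
    rcases hx' with hxc | ⟨-, u, hu, hadjux⟩
    · exact absurd hxc hxC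
    · have hne : u ≠ x := G.ne_of_adj hadjux
      have h1 : T.dist (f u) (f x) ≤ k := (hadj u x hne).mp hadjux
      have h2 : T.dist zC (f u) + 1 ≤ k := hB u hu
      have h3 := T.dist_triangle' zC (f u) (f x)
      omega
  -- Step D/E/F : the restriction root for X
  obtain ⟨zX, hX1, hX2, hX3, hX4⟩ := T.closure_root (Set.mem_image_of_mem f (hCX hc0))
  have hEz : T.Descends zC zX := by
    rcases hC4 with hz0 | ⟨b, hbC, hbne, hzl⟩
    · rw [hz0]; exact hX1 _ ⟨c0, hCX hc0, rfl⟩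
    · obtain ⟨c1, hc1, rfl⟩ := hbC
      rw [hzl]
      exact T.descends_lca (hX1 _ ⟨c0, hCX hc0, rfl⟩) (hX1 _ ⟨c1, hCX hc1, rfl⟩)
  have hF : T.depth zC + 1 ≤ T.depth zX + k := by
    rcases hX4 with hz0 | ⟨b, hbX, hbne, hzl⟩
    · have heq : zX = zC := T.descends_antisymm (by rw [hz0]; exact hC1 _ ⟨c0, hc0, rfl⟩) hEz
      rw [heq]; omega
    · obtain ⟨x1, hx1X, rfl⟩ := hbX
      have hKdef : zX = T.lca zC (f x1) := by
        refine T.lca_unique hEz (hX1 _ ⟨x1, hx1X, rfl⟩) ?_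
        intro x h1 h2
        rw [hzl]
        exact T.descends_lca (T.descends_trans (hC1 _ ⟨c0, hc0, rfl⟩) h1) h2
      by_cases hx1C : x1 ∈ C
      · have heq : zX = zC := by
          rw [hKdef]
          exact (T.lca_unique (T.descends_refl zC) (hC1 _ ⟨x1, hx1C, rfl⟩)
            (fun x h1 _ => h1)).symm
        rw [heq]; omega
      · have hx' := hXC hx1X
        rw [Set.mem_union, Set.mem_setOf_eq] at hx'
        rcases hx' with hxc | ⟨-, u, hu, hadjux⟩
        · exact absurd hxc hx1C
        · have hne : u ≠ x1 := G.ne_of_adj hadjux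
          have hdist1 : T.dist (f u) (f x1) ≤ k := (hadj u x1 hne).mp hadjux
          have hMfx1 : T.Descends (f x1) (T.lca (f u) (f x1)) := T.descends_lca_right _ _
          have hzXfx1 : T.Descends (f x1) zX := hX1 _ ⟨x1, hx1X, rfl⟩
          have hfune : f u ≠ f x1 := fun hh => hne (hinj hh)
          have hMne : T.lca (f u) (f x1) ≠ f x1 := by
            intro he
            exact T.not_descends_leaf (hleaf x1) (he ▸ T.descends_lca_left (f u) (f x1)) hfune
          have hdM : T.depth (T.lca (f u) (f x1)) < T.depth (f x1) := by
            rcases lt_or_eq_of_le (T.depth_le_of_descends hMfx1) with hlt | heq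
            · exact hlt
            · exact absurd (T.eq_of_descends_of_depth_le hMfx1 heq.ge)
                (fun hh => hMne hh.symm)
          have hdzCfu : T.Descends (f u) zC := hC1 _ ⟨u, hu, rfl⟩
          have hBu := hB u hu
          have hdistM := T.dist_eq_int (f u) (f x1)
          rcases T.descends_comparable hMfx1 hzXfx1 with hMzX | hzXM
          · rcases T.descends_comparable (T.descends_lca_left (f u) (f x1)) hdzCfu
                with hMzC | hzCM
            · have hzCfx1 : T.Descends (f x1) zC := T.descends_trans hMfx1 hMzC
              have heq : zX = zC := by
                rw [hKdef]
                exact (T.lca_unique (T.descends_refl zC) hzCfx1 (fun x h1 _ => h1)).symm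
              rw [heq]; omega
            · have hMzX' : T.lca (f u) (f x1) = zX :=
                T.descends_antisymm hMzX (by rw [hKdef]; exact T.descends_lca hzCM hMfx1)
              have d1 := T.depth_le_of_descends hzCM
              have d2 := T.depth_le_of_descends hdzCfu
              rw [hMzX'] at hdM hdistM d1
              omega
          · have d1 := T.depth_le_of_descends hzXM
            have d2 := T.depth_le_of_descends hEz
            have d3 := T.depth_le_of_descends hdzCfu
            omega
  -- Step G : height of T|X at most 3k
  have hGbound : ∀ x ∈ X, T.dist zX (f x) + 1 ≤ 3 * k := by
    intro x hx
    have hdx : T.Descends (f x) zX := hX1 _ ⟨x, hx, rfl⟩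
    have hdistzX : (T.dist zX (f x) : ℤ) = (T.depth (f x) : ℤ) - T.depth zX :=
      T.dist_of_descends_int hdx
    have hLzX : T.Descends (T.lca zC (f x)) zX := T.descends_lca hEz hdx
    have hLzC : T.Descends zC (T.lca zC (f x)) := T.descends_lca_left _ _
    have d1 := T.depth_le_of_descends hLzX
    have d2 := T.depth_le_of_descends hLzC
    have he := T.dist_eq_int zC (f x)
    have hbound : T.dist zC (f x) ≤ 2 * k := by
      by_cases hxC : x ∈ C
      · have := hB x hxC; omega
      · exact hCdist x ⟨hx, hxC⟩
    omega
  refine ⟨zC, hC2, ?_, hB, hCdist, zX, hX2, ?_, hGbound⟩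
  · intro w hw
    rw [T.dist_root_eq, T.dist_root_eq]
    exact T.depth_le_of_descends (hC3 w hw)
  · intro w hw
    rw [T.dist_root_eq, T.dist_root_eq]
    exact T.depth_le_of_descends (hX3 w hw)
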